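/- arXiv:2205.13418 — 3 statements merged into one kernel-verified Lean document; each statement's English description precedes it below -/
import Mathlib

section
/- Let H, ρ, S and V be d×d complex matrices with S Hermitian, and let U_L and V be d×d complex unitary matrices. Define, for real θ, the matrices U_R(θ) = exp(−(i θ/2) S) · V and U(θ) = U_L · U_R(θ), and the cost function C(θ) = Tr(H · U(θ) · ρ · U(θ)*). Then C is differentiable in θ, and its derivative at every θ equals (i/2) · Tr( [U_R(θ) ρ U_R(θ)*, S] · U_L* H U_L ), where [X, Y] = XY − YX denotes the matrix commutator. -/
open Matrix

/-- **Derivative of the variational cost function (Eq. (A38)).**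
With `U_R(θ) = exp(−(iθ/2) S) V`, `U(θ) = U_L U_R(θ)` (`S` Hermitian, `U_L, V` unitary),
the cost `C(θ) = Tr(H U(θ) ρ U(θ)*)` is differentiable in `θ` with derivative
`(i/2) Tr([U_R(θ) ρ U_R(θ)*, S] · U_L* H U_L)`. -/
theorem cost_function_hasDerivAt
    (d : ℕ)
    (H ρ S V UL : Matrix (Fin d) (Fin d) ℂ)
    (hS : S.IsHermitian)
    (hUL : UL ∈ Matrix.unitaryGroup (Fin d) ℂ)
    (hV : V ∈ Matrix.unitaryGroup (Fin d) ℂ)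
    (UR : ℝ → Matrix (Fin d) (Fin d) ℂ)
    (hUR : UR = fun θ : ℝ => NormedSpace.exp ((-(Complex.I * (θ : ℂ)) / 2) • S) * V)
    (U : ℝ → Matrix (Fin d) (Fin d) ℂ)
    (hU : U = fun θ : ℝ => UL * UR θ)
    (C : ℝ → ℂ)
    (hC : C = fun θ : ℝ => Matrix.trace (H * U θ * ρ * star (U θ))) :
    ∀ θ : ℝ, HasDerivAt C
      ((Complex.I / 2) *
        Matrix.trace
          ((UR θ * ρ * star (UR θ) * S - S * (UR θ * ρ * star (UR θ))) *
            (star UL * H * UL))) θ := by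
  intro θ
  letI : NormedRing (Matrix (Fin d) (Fin d) ℂ) := Matrix.linftyOpNormedRing
  letI : NormedAlgebra ℝ (Matrix (Fin d) (Fin d) ℂ) := Matrix.linftyOpNormedAlgebra
  set A : Matrix (Fin d) (Fin d) ℂ := ((-Complex.I)/2) • S with hAdef
  set B : Matrix (Fin d) (Fin d) ℂ := (Complex.I/2) • S with hBdef
  have hexp : (NormedSpace.exp : Matrix (Fin d) (Fin d) ℂ → _) = NormedSpace.exp :=
    rfl
  set E : ℝ → Matrix (Fin d) (Fin d) ℂ := fun u => NormedSpace.exp (u • A) with hEdef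
  set G : ℝ → Matrix (Fin d) (Fin d) ℂ := fun u => NormedSpace.exp (u • B) with hGdef
  -- UR in terms of E
  have hsmulA : ∀ u : ℝ, u • A = (-(Complex.I * (u : ℂ)) / 2) • S := by
    intro u
    rw [hAdef, ← smul_assoc]
    congr 1
    rw [Complex.real_smul]
    ring
  have hURE : ∀ u : ℝ, UR u = E u * V := by
    intro u
    rw [hUR, hEdef]
    simp only [hexp, hsmulA]
  -- star of E is G
  have hstarE : ∀ u : ℝ, star (E u) = G u := by
    intro u
    rw [hEdef, hGdef]
    simp only [hexp]
    rw [NormedSpace.star_exp]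
    congr 1
    have hSs : star S = S := hS
    rw [star_smul, star_trivial, hAdef, star_smul, hSs, hBdef]
    congr 1
    simp [Complex.ext_iff]
  -- commutation of S with E
  have hcommE : S * E θ = E θ * S := by
    have : Commute S (θ • A) := by
      rw [hAdef]
      exact ((Commute.refl S).smul_right _).smul_right _
    exact this.exp_right.eq
  -- derivatives of E and G
  have hE' : HasDerivAt E (E θ * A) θ := hasDerivAt_exp_smul_const A θ
  have hG' : HasDerivAt G (G θ * B) θ := hasDerivAt_exp_smul_const B θ
  set W : Matrix (Fin d) (Fin d) ℂ := V * ρ * star V with hWdef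
  have hM : HasDerivAt (fun u => E u * W * G u)
      (E θ * A * W * G θ + E θ * W * (G θ * B)) θ := (hE'.mul_const W).mul hG'
  set L : Matrix (Fin d) (Fin d) ℂ →ₗ[ℝ] ℂ :=
    { toFun := fun M => Matrix.trace ((H * UL) * M * star UL)
      map_add' := by intro x y; simp [Matrix.mul_add, Matrix.add_mul, Matrix.trace_add]
      map_smul' := by intro c x; simp [Matrix.mul_smul, Matrix.smul_mul, Matrix.trace_smul] } with hLdef
  have hL : HasDerivAt (fun u => L (E u * W * G u))
      (L (E θ * A * W * G θ + E θ * W * (G θ * B))) θ :=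
    (LinearMap.toContinuousLinearMap L).hasFDerivAt.comp_hasDerivAt θ hM
  -- C equals this composition
  have hCeq : C = fun u => L (E u * W * G u) := by
    funext u
    rw [hC, hLdef]
    simp only [LinearMap.coe_mk, AddHom.coe_mk, hU, hURE, hWdef]
    simp only [Matrix.star_mul, hstarE]
    simp only [Matrix.mul_assoc]
  rw [hCeq]
  convert hL using 1
  rw [hLdef]
  simp only [LinearMap.coe_mk, AddHom.coe_mk]
  have hMS : UR θ * ρ * star (UR θ) = E θ * W * G θ := by
    rw [hURE, hWdef]
    simp only [Matrix.star_mul, hstarE]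
    simp only [Matrix.mul_assoc]
  have e1 : E θ * A * W * G θ = ((-Complex.I)/2) • (S * (E θ * W * G θ)) := by
    rw [hAdef, Matrix.mul_smul, Matrix.smul_mul, Matrix.smul_mul]
    congr 1
    rw [← hcommE]
    simp only [Matrix.mul_assoc]
  have e2 : E θ * W * (G θ * B) = (Complex.I/2) • (E θ * W * G θ * S) := by
    rw [hBdef, Matrix.mul_smul, Matrix.mul_smul]
    congr 1
    simp only [Matrix.mul_assoc]
  have cyc : ∀ X : Matrix (Fin d) (Fin d) ℂ,
      Matrix.trace (H * UL * X * star UL) = Matrix.trace (X * (star UL * H * UL)) := by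
    intro X
    rw [Matrix.trace_mul_comm (H * UL * X) (star UL), ← Matrix.mul_assoc,
      Matrix.trace_mul_comm (star UL * (H * UL)) X, ← Matrix.mul_assoc (star UL) H UL]
  rw [hMS, Matrix.mul_add, Matrix.add_mul, Matrix.trace_add, e1, e2,
    Matrix.mul_smul, Matrix.smul_mul, Matrix.trace_smul,
    Matrix.mul_smul, Matrix.smul_mul, Matrix.trace_smul,
    Matrix.sub_mul, Matrix.trace_sub,
    cyc (S * (E θ * W * G θ)), cyc (E θ * W * G θ * S)]
  simp only [smul_eq_mul]
  ring
end

section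
/- Let d ≥ 1 and let μ be the Haar probability measure on the unitary group U(d) of d×d complex unitary matrices. For arbitrary d×d complex matrices ρ, S and K, the integral over W of Tr( [W ρ W*, S] · K ) with respect to μ equals 0, where [X, Y] = XY − YX denotes the matrix commutator. -/
set_option maxHeartbeats 1000000

open MeasureTheory Matrix Topology

/-- **Vanishing Haar average over the right block:** for the Haar probability measure `μ`
on `U(d)` (`d ≥ 1`) and arbitrary `d × d` complex matrices `ρ`, `S`, `K`,
`∫ Tr([W ρ W*, S] K) dμ(W) = 0`. -/
theorem haar_average_commutator_right_block
    (d : ℕ) (hd : 1 ≤ d)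
    [MeasurableSpace (Matrix.unitaryGroup (Fin d) ℂ)]
    [BorelSpace (Matrix.unitaryGroup (Fin d) ℂ)]
    (μ : Measure (Matrix.unitaryGroup (Fin d) ℂ))
    [μ.IsHaarMeasure] [IsProbabilityMeasure μ]
    (ρ S K : Matrix (Fin d) (Fin d) ℂ) :
    ∫ W : Matrix.unitaryGroup (Fin d) ℂ,
        Matrix.trace
          (((W : Matrix (Fin d) (Fin d) ℂ) * ρ * star (W : Matrix (Fin d) (Fin d) ℂ) * S
            - S * ((W : Matrix (Fin d) (Fin d) ℂ) * ρ *
                star (W : Matrix (Fin d) (Fin d) ℂ))) * K) ∂μ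
      = 0 := by
  classical
  haveI : SecondCountableTopology (Matrix (Fin d) (Fin d) ℂ) :=
    inferInstanceAs (SecondCountableTopology (Fin d → Fin d → ℂ))
  haveI : SecondCountableTopology (Matrix.unitaryGroup (Fin d) ℂ) :=
    IsEmbedding.subtypeVal.secondCountableTopology
  haveI : MeasurableMul (Matrix.unitaryGroup (Fin d) ℂ) := by infer_instance
  set f : Matrix.unitaryGroup (Fin d) ℂ → Matrix (Fin d) (Fin d) ℂ :=
    fun W => (W : Matrix (Fin d) (Fin d) ℂ) * ρ * star (W : Matrix (Fin d) (Fin d) ℂ) with hf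
  -- continuity
  have hcoe : Continuous (fun W : Matrix.unitaryGroup (Fin d) ℂ => (W : Matrix (Fin d) (Fin d) ℂ)) := continuous_subtype_val
  have hfc : Continuous f := by
    have : Continuous (fun W : Matrix.unitaryGroup (Fin d) ℂ => star (W : Matrix (Fin d) (Fin d) ℂ)) := by
      simpa [Matrix.star_eq_conjTranspose] using hcoe.matrix_conjTranspose
    exact (hcoe.matrix_mul continuous_const).matrix_mul this
  -- boundedness of entries
  have hbW : ∀ (W : Matrix.unitaryGroup (Fin d) ℂ) (a b : Fin d), ‖(W : Matrix (Fin d) (Fin d) ℂ) a b‖ ≤ 1 :=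
    fun W a b => entry_norm_bound_of_unitary W.2 a b
  have hbound : ∀ (W : Matrix.unitaryGroup (Fin d) ℂ) (i j : Fin d), ‖f W i j‖ ≤ ∑ l, ∑ k, ‖ρ k l‖ := by
    intro W i j
    have e : f W i j = ∑ l, ∑ k, (W : Matrix (Fin d) (Fin d) ℂ) i k * ρ k l *
        (star (W : Matrix (Fin d) (Fin d) ℂ)) l j := by
      simp [hf, Matrix.mul_apply, Finset.sum_mul]
    rw [e]
    refine (norm_sum_le _ _).trans (Finset.sum_le_sum fun l _ => ?_)
    refine (norm_sum_le _ _).trans (Finset.sum_le_sum fun k _ => ?_)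
    rw [norm_mul, norm_mul]
    have h1 := hbW W i k
    have h2 : ‖(star (W : Matrix (Fin d) (Fin d) ℂ)) l j‖ ≤ 1 := by
      rw [Matrix.star_apply, norm_star]; exact hbW W j l
    calc ‖(W : Matrix (Fin d) (Fin d) ℂ) i k‖ * ‖ρ k l‖ *
          ‖(star (W : Matrix (Fin d) (Fin d) ℂ)) l j‖
        ≤ 1 * ‖ρ k l‖ * 1 :=
          mul_le_mul (mul_le_mul h1 le_rfl (norm_nonneg _) zero_le_one) h2
            (norm_nonneg _) (by positivity)
      _ = ‖ρ k l‖ := by ring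
  have hint : ∀ i j : Fin d, Integrable (fun W => f W i j) μ := by
    intro i j
    refine Integrable.mono' (integrable_const (∑ l, ∑ k, ‖ρ k l‖))
      ((hfc.matrix_elem i j).aestronglyMeasurable) ?_
    exact Filter.Eventually.of_forall fun W => hbound W i j
  -- the averaged matrix
  set M : Matrix (Fin d) (Fin d) ℂ := Matrix.of (fun i j => ∫ W, f W i j ∂μ) with hM
  have hMapp : ∀ i j, M i j = ∫ W, f W i j ∂μ := fun i j => rfl
  -- entry expansion of triple products
  have expand : ∀ (A C B : Matrix (Fin d) (Fin d) ℂ) (i j : Fin d),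
      (A * C * B) i j = ∑ l, ∑ k, A i k * C k l * B l j := by
    intro A C B i j
    simp [Matrix.mul_apply, Finset.sum_mul]
  -- swapping integral with the triple product
  have swap_int : ∀ (A B : Matrix (Fin d) (Fin d) ℂ) (i j : Fin d),
      (∫ W, (A * f W * B) i j ∂μ) = (A * M * B) i j := by
    intro A B i j
    have e : ∀ W : Matrix.unitaryGroup (Fin d) ℂ, (A * f W * B) i j = ∑ l, ∑ k, f W k l * (A i k * B l j) := by
      intro W
      rw [expand]
      exact Finset.sum_congr rfl fun l _ => Finset.sum_congr rfl fun k _ => by ring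
    calc (∫ W, (A * f W * B) i j ∂μ)
        = ∫ W, ∑ l, ∑ k, f W k l * (A i k * B l j) ∂μ := by simp_rw [e]
      _ = ∑ l, ∑ k, (∫ W, f W k l ∂μ) * (A i k * B l j) := by
          rw [integral_finset_sum _ fun l _ =>
            integrable_finset_sum _ fun k _ => (hint k l).mul_const _]
          refine Finset.sum_congr rfl fun l _ => ?_
          rw [integral_finset_sum _ fun k _ => (hint k l).mul_const _]
          exact Finset.sum_congr rfl fun k _ => integral_mul_const _ _
      _ = (A * M * B) i j := by
          rw [expand]
          exact Finset.sum_congr rfl fun l _ => Finset.sum_congr rfl fun k _ => by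
            rw [hMapp]; ring
  -- invariance: M commutes with every unitary
  have hcomm : ∀ U : Matrix.unitaryGroup (Fin d) ℂ, (U : Matrix (Fin d) (Fin d) ℂ) * M = M * (U : Matrix (Fin d) (Fin d) ℂ) := by
    intro U
    have hUMU : M = (U : Matrix (Fin d) (Fin d) ℂ) * M * star (U : Matrix (Fin d) (Fin d) ℂ) := by
      ext i j
      have h2 : ∀ W : Matrix.unitaryGroup (Fin d) ℂ, f (U * W) =
          (U : Matrix (Fin d) (Fin d) ℂ) * f W * star (U : Matrix (Fin d) (Fin d) ℂ) := by
        intro W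
        simp only [hf, Submonoid.coe_mul, Matrix.star_mul]
        simp only [mul_assoc]
      calc M i j = ∫ W, f (U * W) i j ∂μ :=
            (integral_mul_left_eq_self (fun W => f W i j) U).symm
        _ = ∫ W, ((U : Matrix (Fin d) (Fin d) ℂ) * f W *
              star (U : Matrix (Fin d) (Fin d) ℂ)) i j ∂μ := by simp_rw [h2]
        _ = ((U : Matrix (Fin d) (Fin d) ℂ) * M * star (U : Matrix (Fin d) (Fin d) ℂ)) i j :=
            swap_int _ _ i j
    have hsU : star (U : Matrix (Fin d) (Fin d) ℂ) * (U : Matrix (Fin d) (Fin d) ℂ) = 1 :=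
      Matrix.mem_unitaryGroup_iff'.mp U.2
    calc (U : Matrix (Fin d) (Fin d) ℂ) * M
        = (U : Matrix (Fin d) (Fin d) ℂ) * M *
            (star (U : Matrix (Fin d) (Fin d) ℂ) * (U : Matrix (Fin d) (Fin d) ℂ)) := by
          rw [hsU, mul_one]
      _ = ((U : Matrix (Fin d) (Fin d) ℂ) * M * star (U : Matrix (Fin d) (Fin d) ℂ)) *
            (U : Matrix (Fin d) (Fin d) ℂ) := by rw [mul_assoc, mul_assoc, mul_assoc]
      _ = M * (U : Matrix (Fin d) (Fin d) ℂ) := by rw [← hUMU]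
  -- M is diagonal
  have hoff : ∀ i j : Fin d, i ≠ j → M i j = 0 := by
    intro i j hij
    set v : Fin d → ℂ := fun t => if t = i then -1 else 1 with hv
    have hDmem : Matrix.diagonal v ∈ Matrix.unitaryGroup (Fin d) ℂ := by
      rw [Matrix.mem_unitaryGroup_iff, Matrix.star_eq_conjTranspose,
        Matrix.diagonal_conjTranspose, Matrix.diagonal_mul_diagonal]
      ext a b
      by_cases hab : a = b
      · subst hab
        by_cases hai : a = i <;> simp [Matrix.diagonal_apply, hv, hai]
      · simp [Matrix.diagonal_apply, Matrix.one_apply, hab]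
    have h := congrArg (fun A => A i j) (hcomm ⟨Matrix.diagonal v, hDmem⟩)
    simp only [Matrix.diagonal_mul, Matrix.mul_diagonal] at h
    have hvi : v i = -1 := by simp [hv]
    have hvj : v j = 1 := by simp [hv, Ne.symm hij]
    rw [hvi, hvj, mul_one] at h
    -- h : -1 * M i j = M i j
    have h2 : (2 : ℂ) * M i j = 0 := by linear_combination -h
    simpa using h2
  -- diagonal entries of M are all equal
  have hdiag : ∀ i j : Fin d, M i i = M j j := by
    intro i j
    rcases eq_or_ne i j with rfl | hij
    · rfl
    set σ : Equiv.Perm (Fin d) := Equiv.swap i j with hσ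
    set P : Matrix (Fin d) (Fin d) ℂ := Matrix.of fun a b => if σ a = b then 1 else 0 with hP
    have hPmem : P ∈ Matrix.unitaryGroup (Fin d) ℂ := by
      rw [Matrix.mem_unitaryGroup_iff]
      ext a b
      simp only [Matrix.mul_apply, Matrix.star_apply, Matrix.one_apply, hP, Matrix.of_apply,
        apply_ite (star : ℂ → ℂ), star_one, star_zero, ite_mul, one_mul, zero_mul]
      rw [Finset.sum_ite_eq (Finset.univ) (σ a) (fun k => if σ b = k then (1:ℂ) else 0)]
      simp [Equiv.apply_eq_iff_eq, eq_comm]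
    have h := congrArg (fun A => A i j) (hcomm ⟨P, hPmem⟩)
    simp only [Matrix.mul_apply, hP, Matrix.of_apply, ite_mul, one_mul, zero_mul,
      mul_ite, mul_one, mul_zero] at h
    rw [Finset.sum_ite_eq Finset.univ (σ i) (fun k => M k j)] at h
    have hcond : ∀ k : Fin d, (σ k = j) = (k = σ j) := by
      intro k
      simp only [eq_iff_iff]
      constructor
      · intro hk; rw [← hk]; simp [hσ]
      · intro hk; rw [hk]; simp [hσ]
    simp_rw [hcond] at h
    rw [Finset.sum_ite_eq' Finset.univ (σ j) (fun k => M i k)] at h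
    simp only [Finset.mem_univ, if_true] at h
    have hσi : σ i = j := by simp [hσ]
    have hσj : σ j = i := by simp [hσ]
    rw [hσi, hσj] at h
    exact h.symm
  -- final computation
  set B : Matrix (Fin d) (Fin d) ℂ := S * K - K * S with hB
  have tlem : ∀ A : Matrix (Fin d) (Fin d) ℂ,
      Matrix.trace ((A * S - S * A) * K) = ∑ i, ∑ j, A i j * B j i := by
    intro A
    have h1 : Matrix.trace ((A * S - S * A) * K) = Matrix.trace (A * B) := by
      rw [hB]
      rw [sub_mul, Matrix.trace_sub, mul_sub, Matrix.trace_sub]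
      congr 1
      · rw [mul_assoc]
      · rw [mul_assoc, Matrix.trace_mul_comm, mul_assoc]
    rw [h1]
    simp [Matrix.trace, Matrix.mul_apply, Matrix.diag]
  have hpoint : ∀ W : Matrix.unitaryGroup (Fin d) ℂ,
      Matrix.trace (((W : Matrix (Fin d) (Fin d) ℂ) * ρ * star (W : Matrix (Fin d) (Fin d) ℂ) * S
        - S * ((W : Matrix (Fin d) (Fin d) ℂ) * ρ * star (W : Matrix (Fin d) (Fin d) ℂ))) * K)
      = ∑ i, ∑ j, f W i j * B j i := fun W => tlem (f W)
  calc ∫ W : Matrix.unitaryGroup (Fin d) ℂ, Matrix.trace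
          (((W : Matrix (Fin d) (Fin d) ℂ) * ρ * star (W : Matrix (Fin d) (Fin d) ℂ) * S
            - S * ((W : Matrix (Fin d) (Fin d) ℂ) * ρ *
                star (W : Matrix (Fin d) (Fin d) ℂ))) * K) ∂μ
      = ∫ W : Matrix.unitaryGroup (Fin d) ℂ, ∑ i, ∑ j, f W i j * B j i ∂μ := by simp_rw [hpoint]
    _ = ∑ i, ∑ j, M i j * B j i := by
        rw [integral_finset_sum _ fun i _ =>
          integrable_finset_sum _ fun j _ => (hint i j).mul_const _]
        refine Finset.sum_congr rfl fun i _ => ?_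
        rw [integral_finset_sum _ fun j _ => (hint i j).mul_const _]
        exact Finset.sum_congr rfl fun j _ => integral_mul_const _ _
    _ = ∑ i, M i i * B i i := by
        refine Finset.sum_congr rfl fun i _ => ?_
        rw [Finset.sum_eq_single i]
        · intro b _ hb
          rw [hoff i b (Ne.symm hb), zero_mul]
        · intro hi; exact absurd (Finset.mem_univ i) hi
    _ = M ⟨0, hd⟩ ⟨0, hd⟩ * ∑ i, B i i := by
        rw [Finset.mul_sum]
        exact Finset.sum_congr rfl fun i _ => by rw [hdiag i ⟨0, hd⟩]
    _ = 0 := by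
        have : ∑ i, B i i = 0 := by
          have : ∑ i, B i i = Matrix.trace B := rfl
          rw [this, hB, Matrix.trace_sub, Matrix.trace_mul_comm, sub_self]
        rw [this, mul_zero]
end

section
/- Let d ≥ 1 and let μ be the Haar probability measure on the unitary group U(d) of d×d complex unitary matrices. For arbitrary d×d complex matrices ρ, S and H, the double integral over (W_L, W_R) of (i/2) · Tr( [W_R ρ W_R*, S] · W_L* H W_L ) with respect to the product measure μ × μ equals 0. -/
open MeasureTheory Matrix

namespace HaarAux
variable {d : ℕ}

/-- permutation matrix -/
def P (σ : Equiv.Perm (Fin d)) : Matrix (Fin d) (Fin d) ℂ :=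
  Matrix.of fun i j => if σ i = j then (1:ℂ) else 0

lemma P_mul (σ : Equiv.Perm (Fin d)) (X : Matrix (Fin d) (Fin d) ℂ) (i j : Fin d) :
    (P σ * X) i j = X (σ i) j := by
  simp [P, Matrix.mul_apply, ite_mul]

lemma mul_P (σ : Equiv.Perm (Fin d)) (X : Matrix (Fin d) (Fin d) ℂ) (i j : Fin d) :
    (X * P σ) i j = X i (σ.symm j) := by
  simp only [P, Matrix.mul_apply, Matrix.of_apply, mul_ite, mul_one, mul_zero]
  rw [Finset.sum_eq_single (σ.symm j)]
  · simp
  · intro k _ hk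
    have : σ k ≠ j := fun h => hk (by rw [← h]; simp)
    simp [this]
  · simp

lemma star_P (σ : Equiv.Perm (Fin d)) : star (P σ) = P σ.symm := by
  ext i j
  simp only [Matrix.star_eq_conjTranspose, Matrix.conjTranspose_apply, P, Matrix.of_apply]
  rw [apply_ite (star : ℂ → ℂ)]
  simp only [star_one, star_zero]
  congr 1
  simp only [eq_iff_iff]
  constructor <;> (rintro rfl; simp)

lemma P_mem (σ : Equiv.Perm (Fin d)) : P σ ∈ Matrix.unitaryGroup (Fin d) ℂ := by
  rw [Matrix.mem_unitaryGroup_iff]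
  rw [star_P]
  ext i j
  rw [P_mul]
  simp [P, Matrix.one_apply]

lemma diag_eq_of_commutes (M : Matrix (Fin d) (Fin d) ℂ)
    (h : ∀ V : Matrix.unitaryGroup (Fin d) ℂ,
      (V : Matrix (Fin d) (Fin d) ℂ) * M = M * (V : Matrix (Fin d) (Fin d) ℂ))
    (a b : Fin d) : M a a = M b b := by
  have h2 := congrArg (fun X => X a b) (h ⟨P (Equiv.swap a b), P_mem _⟩)
  simp only at h2
  rw [P_mul, mul_P] at h2
  simpa [Equiv.symm_swap] using h2.symm

variable {d : ℕ}

noncomputable def u (d : ℕ) (k : Fin d) : ℂ :=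
  Complex.exp ((2 * Real.pi * k / d : ℝ) * Complex.I)

lemma u_unit (k : Fin d) : (starRingEnd ℂ) (u d k) * u d k = 1 := by
  rw [u, ← Complex.exp_conj, ← Complex.exp_add]
  have : (starRingEnd ℂ) (((2 * Real.pi * k / d : ℝ) : ℂ) * Complex.I)
      + ((2 * Real.pi * k / d : ℝ) : ℂ) * Complex.I = 0 := by
    simp [Complex.conj_I, Complex.conj_ofReal, map_ofNat]
  rw [this, Complex.exp_zero]

lemma u_inj {i j : Fin d} (h : u d i = u d j) : i = j := by
  rw [u, u, Complex.exp_eq_exp_iff_exists_int] at h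
  obtain ⟨n, hn⟩ := h
  have hI : ((2 * Real.pi * i / d : ℝ) : ℂ) = ((2 * Real.pi * j / d : ℝ) : ℂ) + n * (2 * Real.pi) := by
    have h2 : ((2 * Real.pi * i / d : ℝ) : ℂ) * Complex.I
        = (((2 * Real.pi * j / d : ℝ) : ℂ) + n * (2 * Real.pi)) * Complex.I := by
      rw [hn]; push_cast; ring
    exact mul_right_cancel₀ Complex.I_ne_zero h2
  have hR : (2 * Real.pi * i / d : ℝ) = 2 * Real.pi * j / d + n * (2 * Real.pi) := by
    exact_mod_cast hI
  have hdpos : (0:ℝ) < d := by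
    have : 0 < d := i.pos -- d nonempty via i
    exact_mod_cast this
  have key : (i : ℝ) = j + n * d := by
    field_simp at hR
    nlinarith [Real.pi_pos]
  have keyZ : ((i:ℕ) : ℤ) = ((j:ℕ) : ℤ) + n * d := by exact_mod_cast key
  have hi : ((i:ℕ) : ℤ) < d := by exact_mod_cast i.isLt
  have hj : ((j:ℕ) : ℤ) < d := by exact_mod_cast j.isLt
  have hi0 : (0:ℤ) ≤ ((i:ℕ) : ℤ) := by positivity
  have hj0 : (0:ℤ) ≤ ((j:ℕ) : ℤ) := by positivity
  have hdZ : (0:ℤ) < d := by exact_mod_cast hdpos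
  have hn0 : n = 0 := by
    rcases lt_trichotomy n 0 with h|h|h
    · have hm : n * (d:ℤ) ≤ -1 * d := mul_le_mul_of_nonneg_right (by omega) (by omega)
      linarith
    · exact h
    · have hm : 1 * (d:ℤ) ≤ n * d := mul_le_mul_of_nonneg_right (by omega) (by omega)
      linarith
  rw [hn0] at keyZ
  simp at keyZ
  exact Fin.ext (by exact_mod_cast keyZ)

noncomputable def D (d : ℕ) : Matrix (Fin d) (Fin d) ℂ := Matrix.diagonal (u d)

lemma D_mem : D d ∈ Matrix.unitaryGroup (Fin d) ℂ := by
  rw [Matrix.mem_unitaryGroup_iff']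
  rw [D, Matrix.star_eq_conjTranspose, Matrix.diagonal_conjTranspose,
    Matrix.diagonal_mul_diagonal]
  convert Matrix.diagonal_one with k
  simpa using u_unit k

lemma offdiag_eq_zero_of_commutes (M : Matrix (Fin d) (Fin d) ℂ)
    (h : ∀ V : Matrix.unitaryGroup (Fin d) ℂ,
      (V : Matrix (Fin d) (Fin d) ℂ) * M = M * (V : Matrix (Fin d) (Fin d) ℂ))
    {i j : Fin d} (hij : i ≠ j) : M i j = 0 := by
  have h2 := congrArg (fun X => X i j) (h ⟨D d, D_mem⟩)
  simp only [D, Matrix.diagonal_mul, Matrix.mul_diagonal] at h2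
  have : (u d i - u d j) * M i j = 0 := by linear_combination h2
  rcases mul_eq_zero.mp this with h3 | h3
  · exact absurd (u_inj (sub_eq_zero.mp h3)) hij
  · exact h3

variable {d : ℕ}

lemma isCompact_ug :
    IsCompact ((Matrix.unitaryGroup (Fin d) ℂ : Submonoid _) : Set (Matrix (Fin d) (Fin d) ℂ)) := by
  have hclosed : IsClosed ((Matrix.unitaryGroup (Fin d) ℂ : Submonoid _) :
      Set (Matrix (Fin d) (Fin d) ℂ)) := by
    have hc : Continuous fun A : Matrix (Fin d) (Fin d) ℂ => A * Aᴴ :=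
      continuous_id.matrix_mul continuous_id.matrix_conjTranspose
    have hset : ((Matrix.unitaryGroup (Fin d) ℂ : Submonoid _) :
        Set (Matrix (Fin d) (Fin d) ℂ))
        = (fun A : Matrix (Fin d) (Fin d) ℂ => A * Aᴴ) ⁻¹' {1} := by
      ext A
      simp [Matrix.mem_unitaryGroup_iff, Matrix.star_eq_conjTranspose, SetLike.mem_coe]
    rw [hset]
    exact isClosed_singleton.preimage hc
  have hK : IsCompact (Set.univ.pi fun _ : Fin d =>
      Set.univ.pi fun _ : Fin d => Metric.closedBall (0:ℂ) 1) :=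
    isCompact_univ_pi fun _ => isCompact_univ_pi fun _ => isCompact_closedBall 0 1
  refine hK.of_isClosed_subset hclosed ?_
  intro A hA
  simp only [Set.mem_pi, Set.mem_univ, forall_true_left, Metric.mem_closedBall,
    dist_zero_right, true_implies]
  intro i j
  exact entry_norm_bound_of_unitary hA i j

instance : CompactSpace (Matrix.unitaryGroup (Fin d) ℂ) :=
  isCompact_iff_compactSpace.mp isCompact_ug

lemma cont_integrable [MeasurableSpace (Matrix.unitaryGroup (Fin d) ℂ)]
    [BorelSpace (Matrix.unitaryGroup (Fin d) ℂ)]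
    (μ : Measure (Matrix.unitaryGroup (Fin d) ℂ)) [IsProbabilityMeasure μ]
    {f : Matrix.unitaryGroup (Fin d) ℂ → ℂ} (hf : Continuous f) : Integrable f μ :=
  hf.integrable_of_hasCompactSupport (IsClosed.isCompact (isClosed_tsupport f))

lemma cont_coe : Continuous fun W : Matrix.unitaryGroup (Fin d) ℂ =>
    (W : Matrix (Fin d) (Fin d) ℂ) := continuous_subtype_val


set_option linter.unusedSectionVars false
noncomputable section Main
variable {d : ℕ} [MeasurableSpace (Matrix.unitaryGroup (Fin d) ℂ)]
  [BorelSpace (Matrix.unitaryGroup (Fin d) ℂ)]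
  (μ : Measure (Matrix.unitaryGroup (Fin d) ℂ)) [μ.IsHaarMeasure] [IsProbabilityMeasure μ]
  (ρ S H : Matrix (Fin d) (Fin d) ℂ)

/-- conjugated state -/
def cmat (ρ : Matrix (Fin d) (Fin d) ℂ) (W : Matrix.unitaryGroup (Fin d) ℂ) :
    Matrix (Fin d) (Fin d) ℂ :=
  (W : Matrix (Fin d) (Fin d) ℂ) * ρ * star (W : Matrix (Fin d) (Fin d) ℂ)

lemma cont_cmat : Continuous (cmat ρ) := by
  have h : Continuous fun W : Matrix.unitaryGroup (Fin d) ℂ =>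
      ((W : Matrix (Fin d) (Fin d) ℂ) * ρ) * (W : Matrix (Fin d) (Fin d) ℂ)ᴴ :=
    (cont_coe.matrix_mul continuous_const).matrix_mul cont_coe.matrix_conjTranspose
  exact h

/-- averaged state -/
noncomputable def Mmat (μ : Measure (Matrix.unitaryGroup (Fin d) ℂ))
    (ρ : Matrix (Fin d) (Fin d) ℂ) : Matrix (Fin d) (Fin d) ℂ :=
  Matrix.of fun i j => ∫ W, cmat ρ W i j ∂μ

lemma mul3_apply (A N B : Matrix (Fin d) (Fin d) ℂ) (i j : Fin d) :
    (A * N * B) i j = ∑ l, ∑ k, A i k * N k l * B l j := by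
  rw [Matrix.mul_apply]
  refine Finset.sum_congr rfl fun l _ => ?_
  rw [Matrix.mul_apply, Finset.sum_mul]

lemma Mmat_conj (V : Matrix.unitaryGroup (Fin d) ℂ) :
    (V : Matrix (Fin d) (Fin d) ℂ) * Mmat μ ρ * star (V : Matrix (Fin d) (Fin d) ℂ)
      = Mmat μ ρ := by
  ext i j
  have key : ∫ W, ((V : Matrix (Fin d) (Fin d) ℂ) * cmat ρ W
      * star (V : Matrix (Fin d) (Fin d) ℂ)) i j ∂μ = Mmat μ ρ i j := by
    have he : ∀ W : Matrix.unitaryGroup (Fin d) ℂ,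
        (V : Matrix (Fin d) (Fin d) ℂ) * cmat ρ W * star (V : Matrix (Fin d) (Fin d) ℂ)
          = cmat ρ (V * W) := by
      intro W
      simp only [cmat, MulMemClass.coe_mul, StarMul.star_mul, mul_assoc]
    calc ∫ W, ((V : Matrix (Fin d) (Fin d) ℂ) * cmat ρ W
          * star (V : Matrix (Fin d) (Fin d) ℂ)) i j ∂μ
        = ∫ W, cmat ρ (V * W) i j ∂μ := by simp_rw [he]
      _ = ∫ W, cmat ρ W i j ∂μ := integral_mul_left_eq_self (fun W => cmat ρ W i j) V
      _ = Mmat μ ρ i j := rfl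
  rw [← key, mul3_apply]
  have hexp : ∀ W : Matrix.unitaryGroup (Fin d) ℂ,
      ((V : Matrix (Fin d) (Fin d) ℂ) * cmat ρ W * star (V : Matrix (Fin d) (Fin d) ℂ)) i j
        = ∑ l, ∑ k, (V : Matrix (Fin d) (Fin d) ℂ) i k * cmat ρ W k l
            * (star (V : Matrix (Fin d) (Fin d) ℂ)) l j := fun W => mul3_apply _ _ _ i j
  simp_rw [hexp]
  rw [integral_finset_sum _ (fun l _ => ?_)]
  swap
  · apply cont_integrable μ
    exact continuous_finset_sum _ fun k _ =>
      (continuous_const.mul ((cont_cmat ρ).matrix_elem k l)).mul continuous_const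
  refine Finset.sum_congr rfl fun l _ => ?_
  rw [integral_finset_sum _ (fun k _ => ?_)]
  swap
  · exact cont_integrable μ
      ((continuous_const.mul ((cont_cmat ρ).matrix_elem k l)).mul continuous_const)
  refine Finset.sum_congr rfl fun k _ => ?_
  show (V : Matrix (Fin d) (Fin d) ℂ) i k * Mmat μ ρ k l
      * (star (V : Matrix (Fin d) (Fin d) ℂ)) l j = _
  rw [show Mmat μ ρ k l = ∫ W, cmat ρ W k l ∂μ from rfl, ← integral_const_mul,
    ← integral_mul_const]

lemma Mmat_comm (V : Matrix.unitaryGroup (Fin d) ℂ) :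
    (V : Matrix (Fin d) (Fin d) ℂ) * Mmat μ ρ
      = Mmat μ ρ * (V : Matrix (Fin d) (Fin d) ℂ) := by
  have h1 : star (V : Matrix (Fin d) (Fin d) ℂ) * (V : Matrix (Fin d) (Fin d) ℂ) = 1 :=
    Unitary.star_mul_self_of_mem V.prop
  have h2 := congrArg (fun X => X * (V : Matrix (Fin d) (Fin d) ℂ)) (Mmat_conj μ ρ V)
  simpa [mul_assoc, h1] using h2

lemma Mmat_scalar (hd : 1 ≤ d) :
    Mmat μ ρ = Mmat μ ρ ⟨0, hd⟩ ⟨0, hd⟩ • (1 : Matrix (Fin d) (Fin d) ℂ) := by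
  ext i j
  by_cases hij : i = j
  · subst hij
    rw [diag_eq_of_commutes (Mmat μ ρ) (Mmat_comm μ ρ) i ⟨0, hd⟩]
    simp [Matrix.one_apply_eq]
  · rw [offdiag_eq_zero_of_commutes (Mmat μ ρ) (Mmat_comm μ ρ) hij]
    simp [Matrix.one_apply_ne hij]

lemma Mmat_commutes_S (hd : 1 ≤ d) : Mmat μ ρ * S - S * Mmat μ ρ = 0 := by
  rw [Mmat_scalar μ ρ hd]
  simp [Matrix.smul_mul, Matrix.mul_smul]

lemma inner_zero (hd : 1 ≤ d) (p q : Fin d) :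
    ∫ W, (cmat ρ W * S - S * cmat ρ W) p q ∂μ = 0 := by
  have hc1 : Continuous fun W : Matrix.unitaryGroup (Fin d) ℂ => (cmat ρ W * S) p q :=
    ((cont_cmat ρ).matrix_mul continuous_const).matrix_elem p q
  have hc2 : Continuous fun W : Matrix.unitaryGroup (Fin d) ℂ => (S * cmat ρ W) p q :=
    (continuous_const.matrix_mul (cont_cmat ρ)).matrix_elem p q
  have h1 : ∫ W, (cmat ρ W * S) p q ∂μ = (Mmat μ ρ * S) p q := by
    simp_rw [Matrix.mul_apply]
    rw [integral_finset_sum _ (fun k _ => ?_)]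
    swap
    · exact cont_integrable μ (((cont_cmat ρ).matrix_elem p k).mul continuous_const)
    exact Finset.sum_congr rfl fun k _ => integral_mul_const _ _
  have h2 : ∫ W, (S * cmat ρ W) p q ∂μ = (S * Mmat μ ρ) p q := by
    simp_rw [Matrix.mul_apply]
    rw [integral_finset_sum _ (fun k _ => ?_)]
    swap
    · exact cont_integrable μ (continuous_const.mul ((cont_cmat ρ).matrix_elem k q))
    exact Finset.sum_congr rfl fun k _ => integral_const_mul _ _
  simp_rw [Matrix.sub_apply]
  rw [integral_sub (cont_integrable μ hc1) (cont_integrable μ hc2), h1, h2,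
    ← Matrix.sub_apply, Mmat_commutes_S μ ρ S hd]
  simp

end Main

lemma cont_bmat {d : ℕ} (H : Matrix (Fin d) (Fin d) ℂ) :
    Continuous fun W : Matrix.unitaryGroup (Fin d) ℂ =>
      star (W : Matrix (Fin d) (Fin d) ℂ) * H * (W : Matrix (Fin d) (Fin d) ℂ) := by
  have h : Continuous fun W : Matrix.unitaryGroup (Fin d) ℂ =>
      ((W : Matrix (Fin d) (Fin d) ℂ)ᴴ * H) * (W : Matrix (Fin d) (Fin d) ℂ) :=
    (cont_coe.matrix_conjTranspose.matrix_mul continuous_const).matrix_mul cont_coe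
  simpa [Matrix.star_eq_conjTranspose] using h

lemma trace_mul_sum {d : ℕ} (X Y : Matrix (Fin d) (Fin d) ℂ) :
    Matrix.trace (X * Y) = ∑ p, ∑ q, X p q * Y q p := by
  simp [Matrix.trace, Matrix.diag, Matrix.mul_apply]

end HaarAux

open HaarAux in
/-- **Vanishing average gradient (Eq. (16)):** with `μ` the Haar probability measure on
`U(d)` (`d ≥ 1`) and arbitrary `d × d` complex matrices `ρ`, `S`, `H`,
`∫∫ (i/2) Tr([W_R ρ W_R*, S] · W_L* H W_L) dμ(W_L) dμ(W_R) = 0`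
with respect to the product measure `μ × μ`. -/
theorem haar_average_gradient_zero
    (d : ℕ) (hd : 1 ≤ d)
    [MeasurableSpace (Matrix.unitaryGroup (Fin d) ℂ)]
    [BorelSpace (Matrix.unitaryGroup (Fin d) ℂ)]
    (μ : Measure (Matrix.unitaryGroup (Fin d) ℂ))
    [μ.IsHaarMeasure] [IsProbabilityMeasure μ]
    (ρ S H : Matrix (Fin d) (Fin d) ℂ) :
    ∫ W : Matrix.unitaryGroup (Fin d) ℂ × Matrix.unitaryGroup (Fin d) ℂ,
        (Complex.I / 2) *
          Matrix.trace
            ((((W.2 : Matrix (Fin d) (Fin d) ℂ) * ρ *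
                  star (W.2 : Matrix (Fin d) (Fin d) ℂ)) * S
              - S * ((W.2 : Matrix (Fin d) (Fin d) ℂ) * ρ *
                  star (W.2 : Matrix (Fin d) (Fin d) ℂ))) *
              (star (W.1 : Matrix (Fin d) (Fin d) ℂ) * H *
                (W.1 : Matrix (Fin d) (Fin d) ℂ)))
        ∂(μ.prod μ)
      = 0 := by
  classical
  have hfun : (fun W : Matrix.unitaryGroup (Fin d) ℂ × Matrix.unitaryGroup (Fin d) ℂ =>
      (Complex.I / 2) *
        Matrix.trace
          ((((W.2 : Matrix (Fin d) (Fin d) ℂ) * ρ *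
                star (W.2 : Matrix (Fin d) (Fin d) ℂ)) * S
            - S * ((W.2 : Matrix (Fin d) (Fin d) ℂ) * ρ *
                star (W.2 : Matrix (Fin d) (Fin d) ℂ))) *
            (star (W.1 : Matrix (Fin d) (Fin d) ℂ) * H *
              (W.1 : Matrix (Fin d) (Fin d) ℂ))))
      = fun W => ∑ p : Fin d, ∑ q : Fin d,
          ((Complex.I / 2) * ((star (W.1 : Matrix (Fin d) (Fin d) ℂ) * H *
              (W.1 : Matrix (Fin d) (Fin d) ℂ)) q p))
            * ((cmat ρ W.2 * S - S * cmat ρ W.2) p q) := by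
    funext W
    rw [trace_mul_sum, Finset.mul_sum]
    simp only [cmat]
    refine Finset.sum_congr rfl fun p _ => ?_
    rw [Finset.mul_sum]
    exact Finset.sum_congr rfl fun q _ => by ring
  have hintB : ∀ q p : Fin d, Integrable (fun x : Matrix.unitaryGroup (Fin d) ℂ =>
      (Complex.I / 2) * ((star (x : Matrix (Fin d) (Fin d) ℂ) * H *
        (x : Matrix (Fin d) (Fin d) ℂ)) q p)) μ :=
    fun q p => cont_integrable μ (continuous_const.mul ((cont_bmat H).matrix_elem q p))
  have hintC : ∀ p q : Fin d, Integrable (fun y : Matrix.unitaryGroup (Fin d) ℂ =>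
      (cmat ρ y * S - S * cmat ρ y) p q) μ :=
    fun p q => cont_integrable μ
      ((((cont_cmat ρ).matrix_mul continuous_const).sub
        (continuous_const.matrix_mul (cont_cmat ρ))).matrix_elem p q)
  rw [hfun, integral_finset_sum _
    (fun p _ => integrable_finset_sum _ fun q _ => (hintB q p).mul_prod (hintC p q))]
  refine Finset.sum_eq_zero fun p _ => ?_
  rw [integral_finset_sum _ (fun q _ => (hintB q p).mul_prod (hintC p q))]
  refine Finset.sum_eq_zero fun q _ => ?_
  exact (integral_prod_mul
      (fun x : Matrix.unitaryGroup (Fin d) ℂ =>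
        (Complex.I / 2) * ((star (x : Matrix (Fin d) (Fin d) ℂ) * H *
          (x : Matrix (Fin d) (Fin d) ℂ)) q p))
      (fun y : Matrix.unitaryGroup (Fin d) ℂ =>
        (cmat ρ y * S - S * cmat ρ y) p q)).trans
    (by rw [inner_zero μ ρ S hd p q, mul_zero])
end
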